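/- Let K be a field, d ≥ 1, and let z_1, …, z_d be pairwise distinct elements of K. Define the moments M_ℓ = ∏_{m ≠ ℓ} z_m/(z_m − z_ℓ). Then for every integer n ≥ d one has Σ_{ℓ=1}^{d} z_ℓ^n · M_ℓ = (−1)^{d+1} · h_{n−d}(z_1, …, z_d) · z_1 ⋯ z_d. -/

import Mathlib

open Finset Polynomial


lemma mhd_geom {K : Type*} [CommRing K] (z : K) :
    (1 - PowerSeries.C z * PowerSeries.X) * PowerSeries.mk (fun k => z ^ k) = 1 := by
  ext n
  rw [sub_mul, one_mul, map_sub, mul_assoc]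
  cases n with
  | zero => simp
  | succ m =>
    simp [PowerSeries.coeff_C_mul, PowerSeries.coeff_succ_X_mul, pow_succ, mul_comm]

lemma mhd_bridge {K : Type*} [CommSemiring K] (d r : ℕ) (z : Fin d → K) :
    (∑ k ∈ Finset.Nat.antidiagonalTuple d r, ∏ i, z i ^ k i)
      = ∑ l ∈ Finset.finsuppAntidiag (Finset.univ : Finset (Fin d)) r, ∏ i, z i ^ l i := by
  refine Finset.sum_nbij' (fun k => Finsupp.equivFunOnFinite.symm k) (fun l => ⇑l) ?_ ?_ ?_ ?_ ?_
  · intro k hk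
    simp only [Finset.Nat.mem_antidiagonalTuple] at hk
    simp [Finset.mem_finsuppAntidiag, Finsupp.sum_fintype, hk]
  · intro l hl
    simp only [Finset.mem_finsuppAntidiag] at hl
    simp [Finset.Nat.mem_antidiagonalTuple, hl.1]
  · intro k _; simp [Finsupp.equivFunOnFinite]; rfl
  · intro l _; simp
  · intro k _; simp
lemma mhd_poly {K : Type*} [Field K] (d : ℕ) (hd : 1 ≤ d) (z : Fin d → K)
    (hz : Function.Injective z) (hz0 : ∀ i, z i ≠ 0) :
    (∑ ℓ, C (∏ m ∈ Finset.univ.erase ℓ, z ℓ / (z ℓ - z m)) *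
        ∏ m ∈ Finset.univ.erase ℓ, (1 - C (z m) * X)) = (1 : K[X]) := by
  set P : K[X] := ∑ ℓ, C (∏ m ∈ Finset.univ.erase ℓ, z ℓ / (z ℓ - z m)) *
        ∏ m ∈ Finset.univ.erase ℓ, (1 - C (z m) * X) with hP
  have hsub : ∀ ℓ m : Fin d, m ≠ ℓ → z ℓ - z m ≠ 0 := by
    intro ℓ m h
    exact sub_ne_zero.mpr fun e => h (hz e.symm)
  have heval : ∀ j : Fin d, P.eval (z j)⁻¹ = 1 := by
    intro j
    rw [hP, eval_finset_sum]
    rw [Finset.sum_eq_single j]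
    · rw [eval_mul, eval_C, eval_prod, ← Finset.prod_mul_distrib]
      rw [Finset.prod_congr rfl (g := fun _ => (1:K)) ?_, Finset.prod_const_one]
      intro m hm
      simp only [eval_sub, eval_one, eval_mul, eval_C, eval_X]
      rw [Finset.mem_erase] at hm
      have h1 : z j ≠ 0 := hz0 j
      have h2 : z j - z m ≠ 0 := hsub j m hm.1
      field_simp
    · intro ℓ _ hℓ
      rw [eval_mul]
      refine mul_eq_zero_of_right _ ?_
      rw [eval_prod]
      refine Finset.prod_eq_zero (Finset.mem_erase.mpr ⟨hℓ.symm, Finset.mem_univ j⟩) ?_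
      simp [hz0 j]
    · simp
  have hdeg : ∀ ℓ : Fin d, (C (∏ m ∈ Finset.univ.erase ℓ, z ℓ / (z ℓ - z m)) *
        ∏ m ∈ Finset.univ.erase ℓ, (1 - C (z m) * X)).natDegree ≤ d - 1 := by
    intro ℓ
    refine le_trans (natDegree_mul_le) ?_
    rw [natDegree_C, zero_add]
    refine le_trans (natDegree_prod_le _ _) ?_
    refine le_trans (Finset.sum_le_card_nsmul _ _ 1 ?_) ?_
    · intro m _
      refine le_trans (natDegree_sub_le _ _) ?_
      simp only [natDegree_one, max_le_iff]
      constructor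
      · omega
      · exact le_trans (natDegree_mul_le) (by simp)
    · simp [Finset.card_erase_of_mem]
  have hPdeg : P.natDegree ≤ d - 1 := by
    rw [hP]
    exact natDegree_sum_le_of_forall_le _ _ (fun i _ => hdeg i)
  have h0 : P - 1 = 0 := by
    refine Polynomial.eq_zero_of_natDegree_lt_card_of_eval_eq_zero (P - 1)
      (f := fun j : Fin d => (z j)⁻¹) ?_ ?_ ?_
    · intro a b hab
      exact hz (inv_injective hab)
    · intro j; simp [heval j]
    · have h1 : (P - 1).natDegree ≤ d - 1 := by
        refine le_trans (natDegree_sub_le _ _) ?_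
        simp only [natDegree_one, max_le_iff]
        exact ⟨hPdeg, by omega⟩
      have h2 : Fintype.card (Fin d) = d := Fintype.card_fin d
      omega
  exact sub_eq_zero.mp h0
lemma mhd_core {K : Type*} [Field K] (d : ℕ) (hd : 1 ≤ d) (z : Fin d → K)
    (hz : Function.Injective z) (hz0 : ∀ i, z i ≠ 0) (r : ℕ) :
    (∑ l ∈ Finset.finsuppAntidiag (Finset.univ : Finset (Fin d)) r, ∏ i, z i ^ l i)
      = ∑ ℓ, (∏ m ∈ Finset.univ.erase ℓ, z ℓ / (z ℓ - z m)) * z ℓ ^ r := by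
  have hcast : (∑ ℓ, PowerSeries.C (∏ m ∈ Finset.univ.erase ℓ, z ℓ / (z ℓ - z m)) *
      ∏ m ∈ Finset.univ.erase ℓ, (1 - PowerSeries.C (z m) * PowerSeries.X))
        = (1 : PowerSeries K) := by
    have hc := congrArg (⇑(Polynomial.coeToPowerSeries.ringHom (R := K))) (mhd_poly d hd z hz hz0)
    simpa only [map_sum, map_mul, map_prod, map_sub, map_one,
      Polynomial.coeToPowerSeries.ringHom_apply, Polynomial.coe_C, Polynomial.coe_X] using hc
  have hps : (∏ i, PowerSeries.mk fun k => z i ^ k)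
      = ∑ ℓ, PowerSeries.C (∏ m ∈ Finset.univ.erase ℓ, z ℓ / (z ℓ - z m)) *
          PowerSeries.mk (fun k => z ℓ ^ k) := by
    symm
    calc (∑ ℓ, PowerSeries.C (∏ m ∈ Finset.univ.erase ℓ, z ℓ / (z ℓ - z m)) *
            PowerSeries.mk (fun k => z ℓ ^ k))
        = ∑ ℓ, PowerSeries.C (∏ m ∈ Finset.univ.erase ℓ, z ℓ / (z ℓ - z m)) *
            ((∏ i, PowerSeries.mk fun k => z i ^ k) *
              ∏ m ∈ Finset.univ.erase ℓ, (1 - PowerSeries.C (z m) * PowerSeries.X)) := by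
          refine Finset.sum_congr rfl (fun ℓ _ => ?_)
          congr 1
          rw [← Finset.mul_prod_erase Finset.univ _ (Finset.mem_univ ℓ), mul_assoc,
            ← Finset.prod_mul_distrib]
          rw [Finset.prod_congr rfl (g := fun _ => (1 : PowerSeries K))
            (fun m _ => by rw [mul_comm]; exact mhd_geom (z m)), Finset.prod_const_one, mul_one]
      _ = (∏ i, PowerSeries.mk fun k => z i ^ k) *
            ∑ ℓ, PowerSeries.C (∏ m ∈ Finset.univ.erase ℓ, z ℓ / (z ℓ - z m)) *
              ∏ m ∈ Finset.univ.erase ℓ, (1 - PowerSeries.C (z m) * PowerSeries.X) := by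
          rw [Finset.mul_sum]
          exact Finset.sum_congr rfl (fun ℓ _ => by ring)
      _ = (∏ i, PowerSeries.mk fun k => z i ^ k) := by rw [hcast, mul_one]
  have h := congrArg (⇑(PowerSeries.coeff r)) hps
  rw [PowerSeries.coeff_prod] at h
  simpa only [map_sum, PowerSeries.coeff_C_mul, PowerSeries.coeff_mk] using h

/-- High-degree moment identity: `∑ z_ℓ^n M_ℓ = (-1)^{d+1} h_{n-d}(z) z_1 ⋯ z_d`
for `n ≥ d` (Lemmas 3.2 and 3.3). -/
theorem moments_high_degree {K : Type*} [Field K] (d : ℕ) (hd : 1 ≤ d)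
    (z : Fin d → K) (hz : Function.Injective z) (n : ℕ) (hn : d ≤ n) :
    (∑ ℓ, z ℓ ^ n * ∏ m ∈ Finset.univ.erase ℓ, z m / (z m - z ℓ))
      = (-1 : K) ^ (d + 1) *
        (∑ k ∈ Finset.Nat.antidiagonalTuple d (n - d), ∏ i, z i ^ k i) *
        ∏ i, z i := by
  by_cases hzero : ∃ i, z i = 0
  · obtain ⟨i0, hi0⟩ := hzero
    rw [Finset.prod_eq_zero (Finset.mem_univ i0) hi0, mul_zero]
    refine Finset.sum_eq_zero (fun ℓ _ => ?_)
    by_cases hl : ℓ = i0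
    · subst hl; rw [hi0, zero_pow (by omega), zero_mul]
    · rw [Finset.prod_eq_zero
        (Finset.mem_erase.mpr ⟨Ne.symm hl, Finset.mem_univ i0⟩) (by rw [hi0, zero_div]), mul_zero]
  · push_neg at hzero
    rw [mhd_bridge, mhd_core d hd z hz hzero (n - d), Finset.mul_sum, Finset.sum_mul]
    refine Finset.sum_congr rfl (fun ℓ _ => ?_)
    have hcard : (Finset.univ.erase ℓ).card = d - 1 := by
      rw [Finset.card_erase_of_mem (Finset.mem_univ ℓ), Finset.card_univ, Fintype.card_fin]
    have h1 : (∏ m ∈ Finset.univ.erase ℓ, z m / (z m - z ℓ))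
        = (-1 : K) ^ (d - 1) * ∏ m ∈ Finset.univ.erase ℓ, z m / (z ℓ - z m) := by
      rw [← hcard, ← Finset.prod_const (-1 : K), ← Finset.prod_mul_distrib]
      refine Finset.prod_congr rfl (fun m hm => ?_)
      rw [show z m - z ℓ = -(z ℓ - z m) from by ring, div_neg]
      ring
    have h2 : (∏ m ∈ Finset.univ.erase ℓ, z ℓ / (z ℓ - z m)) * ∏ m ∈ Finset.univ.erase ℓ, z m
        = z ℓ ^ (d - 1) * ∏ m ∈ Finset.univ.erase ℓ, z m / (z ℓ - z m) := by
      rw [← Finset.prod_mul_distrib, ← hcard, ← Finset.prod_const (z ℓ),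
        ← Finset.prod_mul_distrib]
      exact Finset.prod_congr rfl (fun m hm => by ring)
    have h3 : (∏ i, z i) = z ℓ * ∏ m ∈ Finset.univ.erase ℓ, z m :=
      (Finset.mul_prod_erase _ _ (Finset.mem_univ ℓ)).symm
    have hsign : (-1 : K) ^ (d + 1) = (-1 : K) ^ (d - 1) := by
      rw [show d + 1 = (d - 1) + 2 from by omega, pow_add, neg_one_sq, mul_one]
    have hpow : z ℓ ^ (n - d) * (z ℓ * z ℓ ^ (d - 1)) = z ℓ ^ n := by
      rw [← pow_succ', ← pow_add]
      congr 1
      omega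
    rw [h1, h3, hsign]
    linear_combination (-((-1 : K) ^ (d - 1) * z ℓ ^ (n - d) * z ℓ)) * h2
      - ((-1 : K) ^ (d - 1) * ∏ m ∈ Finset.univ.erase ℓ, z m / (z ℓ - z m)) * hpow
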